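/- Fix μ > 0, a = b = 7/2, a positive integer K, and T ∈ ℕ with (T:ℝ) > 2/(K·a − 2). Then the consecutive blocking probabilities satisfy the two-sided strict bound λ·P_b(K,T) < P_b(K,T+1) < ((T+1)(T + K·a + 1)/(T+2)²)·λ·P_b(K,T), where λ = μ/(μ + b). -/

import Mathlib

open scoped BigOperators

/-- The distribution of the number of users in the coverage of a cluster of `K` RRUs:
`P_K(n) = b^{Ka} μ^n Γ(n + Ka) / ((μ + b)^{Ka+n} Γ(Ka) n!)` with `a = b = 7/2`. -/
noncomputable def Puser (μ : ℝ) (K : ℕ) (n : ℕ) : ℝ :=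
  (7/2 : ℝ) ^ ((K : ℝ) * (7/2)) * μ ^ n * Real.Gamma ((n : ℝ) + (K : ℝ) * (7/2)) /
    ((μ + 7/2) ^ ((K : ℝ) * (7/2) + (n : ℝ)) * Real.Gamma ((K : ℝ) * (7/2)) *
      (n.factorial : ℝ))

/-- The `n`-th summand of the user blocking probability: `((n − T)/n)·P_K(n)` for
`n ≥ T + 1`, and `0` otherwise. -/
noncomputable def blockTerm (μ : ℝ) (K T : ℕ) (n : ℕ) : ℝ :=
  if T + 1 ≤ n then (((n : ℝ) - (T : ℝ)) / (n : ℝ)) * Puser μ K n else 0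

/-- The user blocking probability `P_b(K,T) = Σ_{n=T+1}^∞ ((n − T)/n)·P_K(n)`. -/
noncomputable def Pblock (μ : ℝ) (K T : ℕ) : ℝ := ∑' n : ℕ, blockTerm μ K T n

open Filter Topology

section aux

variable {μ : ℝ} (hμ : 0 < μ) {K : ℕ} (hK : 0 < K)

lemma hA1 (hK : 0 < K) : (7/2 : ℝ) ≤ (K : ℝ) * (7/2) := by
  have : (1:ℝ) ≤ (K:ℝ) := by exact_mod_cast hK
  nlinarith

include hμ hK in
lemma Puser_pos (n : ℕ) : 0 < Puser μ K n := by
  have hA : (0:ℝ) < (K:ℝ) * (7/2) := by linarith [hA1 hK]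
  have h1 : (0:ℝ) < (7/2 : ℝ) ^ ((K : ℝ) * (7/2)) := Real.rpow_pos_of_pos (by norm_num) _
  have h2 : (0:ℝ) < μ ^ n := pow_pos hμ n
  have h3 : (0:ℝ) < Real.Gamma ((n : ℝ) + (K : ℝ) * (7/2)) :=
    Real.Gamma_pos_of_pos (by positivity)
  have h4 : (0:ℝ) < (μ + 7/2) ^ ((K : ℝ) * (7/2) + (n : ℝ)) :=
    Real.rpow_pos_of_pos (by linarith) _
  have h5 : (0:ℝ) < Real.Gamma ((K : ℝ) * (7/2)) := Real.Gamma_pos_of_pos hA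
  have h6 : (0:ℝ) < (n.factorial : ℝ) := by exact_mod_cast n.factorial_pos
  unfold Puser
  positivity

include hμ hK in
lemma Puser_succ (n : ℕ) :
    Puser μ K (n + 1) =
      (μ / (μ + 7/2)) * (((n : ℝ) + (K : ℝ) * (7/2)) / ((n : ℝ) + 1)) * Puser μ K n := by
  have hA : (0:ℝ) < (K:ℝ) * (7/2) := by linarith [hA1 hK]
  have hb : (0:ℝ) < μ + 7/2 := by linarith
  have hnA : ((n : ℝ) + (K : ℝ) * (7/2)) ≠ 0 := by positivity
  have hgamma : Real.Gamma (((n+1 : ℕ) : ℝ) + (K : ℝ) * (7/2)) =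
      ((n : ℝ) + (K : ℝ) * (7/2)) * Real.Gamma ((n : ℝ) + (K : ℝ) * (7/2)) := by
    push_cast
    rw [show (n : ℝ) + 1 + (K : ℝ) * (7/2) = ((n : ℝ) + (K : ℝ) * (7/2)) + 1 by ring,
      Real.Gamma_add_one hnA]
  have hrpow : (μ + 7/2) ^ ((K : ℝ) * (7/2) + ((n+1 : ℕ) : ℝ)) =
      (μ + 7/2) ^ ((K : ℝ) * (7/2) + (n : ℝ)) * (μ + 7/2) := by
    push_cast
    rw [show (K : ℝ) * (7/2) + ((n:ℝ) + 1) = ((K : ℝ) * (7/2) + (n : ℝ)) + 1 by ring,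
      Real.rpow_add_one (by positivity)]
  have hfac : (((n+1).factorial : ℕ) : ℝ) = ((n:ℝ) + 1) * (n.factorial : ℝ) := by
    rw [Nat.factorial_succ]; push_cast; ring
  have h4 : ((μ + 7/2) ^ ((K : ℝ) * (7/2) + (n : ℝ))) ≠ 0 :=
    (Real.rpow_pos_of_pos hb _).ne'
  have h5 : Real.Gamma ((K : ℝ) * (7/2)) ≠ 0 := (Real.Gamma_pos_of_pos hA).ne'
  have h6 : (n.factorial : ℝ) ≠ 0 := by exact_mod_cast n.factorial_ne_zero
  have hn1 : ((n:ℝ) + 1) ≠ 0 := by positivity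
  unfold Puser
  rw [hgamma, hrpow, hfac, pow_succ]
  field_simp

include hμ hK in
lemma summable_Puser : Summable (Puser μ K) := by
  set A := (K : ℝ) * (7/2) with hAdef
  have hb : (0:ℝ) < μ + 7/2 := by linarith
  have hlam : μ / (μ + 7/2) < 1 := by
    rw [div_lt_one hb]; linarith
  apply summable_of_ratio_test_tendsto_lt_one hlam
  · exact Filter.Eventually.of_forall fun n => (Puser_pos hμ hK n).ne'
  · have heq : ∀ n : ℕ, ‖Puser μ K (n+1)‖ / ‖Puser μ K n‖ =
        μ / (μ + 7/2) * (1 + (A - 1) * (1 / ((n:ℝ) + 1))) := by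
      intro n
      have hn1 : ((n:ℝ) + 1) ≠ 0 := by positivity
      rw [Real.norm_of_nonneg (Puser_pos hμ hK (n+1)).le,
        Real.norm_of_nonneg (Puser_pos hμ hK n).le, Puser_succ hμ hK n,
        mul_div_assoc, div_self (Puser_pos hμ hK n).ne']
      field_simp
      ring
    have h2 : Filter.Tendsto (fun n : ℕ => μ / (μ + 7/2) * (1 + (A - 1) * (1 / ((n:ℝ) + 1))))
        atTop (𝓝 (μ / (μ + 7/2) * (1 + (A - 1) * 0))) :=
      tendsto_const_nhds.mul (tendsto_const_nhds.add
        (tendsto_const_nhds.mul tendsto_one_div_add_atTop_nhds_zero_nat))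
    simp only [mul_zero, add_zero, mul_one] at h2
    exact Filter.Tendsto.congr (fun n => (heq n).symm) h2

include hμ hK in
lemma blockTerm_nonneg (T n : ℕ) : 0 ≤ blockTerm μ K T n := by
  unfold blockTerm
  split_ifs with h
  · have hn : (0:ℝ) < (n:ℝ) := by
      have : 0 < n := lt_of_lt_of_le (Nat.succ_pos T) h
      exact_mod_cast this
    have hTn : (T:ℝ) < (n:ℝ) := by
      have : T < n := h
      exact_mod_cast this
    have hP := Puser_pos hμ hK n
    exact mul_nonneg (div_pos (by linarith) hn).le hP.le
  · exact le_refl 0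

include hμ hK in
lemma blockTerm_pos {T n : ℕ} (h : T + 1 ≤ n) : 0 < blockTerm μ K T n := by
  unfold blockTerm
  rw [if_pos h]
  have hn : (0:ℝ) < (n:ℝ) := by
    have : 0 < n := lt_of_lt_of_le (Nat.succ_pos T) h
    exact_mod_cast this
  have hTn : (T:ℝ) < (n:ℝ) := by
    have : T < n := h
    exact_mod_cast this
  have hP := Puser_pos hμ hK n
  exact mul_pos (div_pos (by linarith) hn) hP

include hμ hK in
lemma summable_blockTerm (T : ℕ) : Summable (blockTerm μ K T) := by
  apply Summable.of_nonneg_of_le (blockTerm_nonneg hμ hK T) _ (summable_Puser hμ hK)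
  intro n
  unfold blockTerm
  split_ifs with h
  · have hn : (0:ℝ) < (n:ℝ) := by
      have : 0 < n := lt_of_lt_of_le (Nat.succ_pos T) h
      exact_mod_cast this
    have hP := Puser_pos hμ hK n
    have hcoef : ((n : ℝ) - (T : ℝ)) / (n : ℝ) ≤ 1 := by
      rw [div_le_one hn]
      have : (0:ℝ) ≤ (T:ℝ) := Nat.cast_nonneg T
      linarith
    calc ((n : ℝ) - (T : ℝ)) / (n : ℝ) * Puser μ K n ≤ 1 * Puser μ K n := by
          apply mul_le_mul_of_nonneg_right hcoef hP.le
      _ = Puser μ K n := one_mul _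
  · exact (Puser_pos hμ hK n).le

include hμ hK in
lemma blockTerm_succ_eq (T m : ℕ) :
    blockTerm μ K (T + 1) (m + 1) =
      (μ / (μ + 7/2)) * ((m : ℝ) * ((m : ℝ) + (K : ℝ) * (7/2)) / ((m : ℝ) + 1) ^ 2) *
        blockTerm μ K T m := by
  unfold blockTerm
  by_cases h : T + 1 ≤ m
  · rw [if_pos (by omega : T + 1 + 1 ≤ m + 1), if_pos h, Puser_succ hμ hK m]
    have hm : (0:ℝ) < (m:ℝ) := by
      have : 0 < m := lt_of_lt_of_le (Nat.succ_pos T) h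
      exact_mod_cast this
    have hm1 : ((m:ℝ) + 1) ≠ 0 := by positivity
    push_cast
    field_simp
    ring
  · rw [if_neg (by omega : ¬ (T + 1 + 1 ≤ m + 1)), if_neg h, mul_zero]

/-- The key polynomial inequality: for `x ≥ T+1` (given `T(A-2) > 2`, `A ≥ 7/2`)
we have `x(x+A)(T+2)² ≤ (T+1)(T+1+A)(x+1)²`. -/
lemma keyIneq {A t x : ℝ} (hA : 7/2 ≤ A) (hδ : 2 < t * (A - 2)) (ht0 : 0 ≤ t)
    (hx : t + 1 ≤ x) :
    x * (x + A) * (t + 2) ^ 2 ≤ (t + 1) * (t + 1 + A) * (x + 1) ^ 2 := by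
  have hs : 0 ≤ x - (t + 1) := by linarith
  have hδ' : 0 ≤ t * A - 2 * t - 2 := by nlinarith
  nlinarith [mul_nonneg (mul_nonneg hs hs) hδ', mul_nonneg (mul_nonneg hs hs) (by linarith : (0:ℝ) ≤ A - 1),
    mul_nonneg (mul_nonneg hs hδ') ht0, mul_nonneg hs hδ']

lemma keyIneqStrict {A t x : ℝ} (hA : 7/2 ≤ A) (hδ : 2 < t * (A - 2)) (ht0 : 0 ≤ t)
    (hx : t + 1 < x) :
    x * (x + A) * (t + 2) ^ 2 < (t + 1) * (t + 1 + A) * (x + 1) ^ 2 := by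
  have hs : 0 < x - (t + 1) := by linarith
  have hδ' : 0 < t * A - 2 * t - 2 := by nlinarith
  nlinarith [mul_nonneg (mul_nonneg hs.le hs.le) hδ'.le,
    mul_nonneg (mul_nonneg hs.le hs.le) (by linarith : (0:ℝ) ≤ A - 1),
    mul_nonneg (mul_nonneg hs.le hδ'.le) ht0,
    mul_pos (mul_pos hs hδ') (by linarith : (0:ℝ) < t + 2)]

end aux

/-- two-sided strict bound relating consecutive blocking
probabilities: `λ·P_b(K,T) < P_b(K,T+1) < ((T+1)(T+Ka+1)/(T+2)²)·λ·P_b(K,T)`. -/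
theorem Pblock_succ_bounds (μ : ℝ) (hμ : 0 < μ) (K : ℕ) (hK : 0 < K) (T : ℕ)
    (hT : (T : ℝ) > 2 / ((K : ℝ) * (7/2) - 2)) :
    (μ / (μ + 7/2)) * Pblock μ K T < Pblock μ K (T + 1) ∧
      Pblock μ K (T + 1) <
        (((T : ℝ) + 1) * ((T : ℝ) + (K : ℝ) * (7/2) + 1) / ((T : ℝ) + 2) ^ 2) *
          (μ / (μ + 7/2)) * Pblock μ K T := by
  set A : ℝ := (K : ℝ) * (7/2) with hAdef
  have hA : (7/2 : ℝ) ≤ A := hA1 hK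
  have hA2 : (0:ℝ) < A - 2 := by linarith
  have hδ : 2 < (T : ℝ) * (A - 2) := by
    rw [gt_iff_lt, div_lt_iff₀ hA2] at hT
    linarith
  have hT0 : (0:ℝ) ≤ (T:ℝ) := Nat.cast_nonneg T
  set lam : ℝ := μ / (μ + 7/2) with hlamdef
  have hb : (0:ℝ) < μ + 7/2 := by linarith
  have hlam : 0 < lam := div_pos hμ hb
  -- ratio function
  set r : ℕ → ℝ := fun m => (m : ℝ) * ((m : ℝ) + A) / ((m : ℝ) + 1) ^ 2 with hrdef
  -- the shifted representation of Pblock (T+1)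
  have hsum : Summable (blockTerm μ K T) := summable_blockTerm hμ hK T
  have hsum1 : Summable (blockTerm μ K (T + 1)) := summable_blockTerm hμ hK (T + 1)
  have hshift : Pblock μ K (T + 1) = ∑' m : ℕ, lam * r m * blockTerm μ K T m := by
    unfold Pblock
    rw [Summable.tsum_eq_zero_add hsum1]
    have h0 : blockTerm μ K (T + 1) 0 = 0 := by
      unfold blockTerm
      rw [if_neg (by omega)]
    rw [h0, zero_add]
    exact tsum_congr fun m => blockTerm_succ_eq hμ hK T m
  have hsumg : Summable (fun m : ℕ => lam * r m * blockTerm μ K T m) := by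
    have := (summable_nat_add_iff 1).2 hsum1
    exact this.congr fun m => blockTerm_succ_eq hμ hK T m
  -- positivity facts
  have hBT1 : 0 < blockTerm μ K T (T + 1) := blockTerm_pos hμ hK le_rfl
  have hBT2 : 0 < blockTerm μ K T (T + 2) := blockTerm_pos hμ hK (by omega)
  constructor
  · -- lower bound
    have hrepr : lam * Pblock μ K T = ∑' m : ℕ, lam * blockTerm μ K T m := by
      unfold Pblock; rw [tsum_mul_left]
    rw [hrepr, hshift]
    apply Summable.tsum_lt_tsum_of_nonneg (i := T + 1)
    · intro m
      exact mul_nonneg hlam.le (blockTerm_nonneg hμ hK T m)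
    · intro m
      by_cases h : T + 1 ≤ m
      · have hm : (1:ℝ) ≤ (m:ℝ) := by
          have : 1 ≤ m := le_trans (Nat.le_add_left 1 T) h
          exact_mod_cast this
        have hr1 : 1 ≤ r m := by
          rw [hrdef]
          have hden : (0:ℝ) < ((m:ℝ) + 1)^2 := by positivity
          rw [le_div_iff₀ hden]
          nlinarith
        have hbt := blockTerm_nonneg hμ hK T m
        calc lam * blockTerm μ K T m = 1 * (lam * blockTerm μ K T m) := (one_mul _).symm
          _ ≤ r m * (lam * blockTerm μ K T m) :=
              mul_le_mul_of_nonneg_right hr1 (mul_nonneg hlam.le hbt)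
          _ = lam * r m * blockTerm μ K T m := by ring
      · have h0 : blockTerm μ K T m = 0 := by
          unfold blockTerm; rw [if_neg h]
        rw [h0, mul_zero, mul_zero]
    · -- strict at T+1
      have hr1 : 1 < r (T + 1) := by
        rw [hrdef]
        have hden : (0:ℝ) < (((T+1:ℕ):ℝ) + 1)^2 := by positivity
        rw [lt_div_iff₀ hden]
        push_cast
        nlinarith
      calc lam * blockTerm μ K T (T + 1) = 1 * (lam * blockTerm μ K T (T + 1)) := (one_mul _).symm
        _ < r (T+1) * (lam * blockTerm μ K T (T + 1)) :=
            mul_lt_mul_of_pos_right hr1 (mul_pos hlam hBT1)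
        _ = lam * r (T+1) * blockTerm μ K T (T + 1) := by ring
    · exact hsumg
  · -- upper bound
    set R : ℝ := ((T : ℝ) + 1) * ((T : ℝ) + A + 1) / ((T : ℝ) + 2) ^ 2 with hRdef
    have hrepr : R * lam * Pblock μ K T = ∑' m : ℕ, R * lam * blockTerm μ K T m := by
      unfold Pblock; rw [tsum_mul_left]
    rw [hshift, hrepr]
    have hrle : ∀ m : ℕ, T + 1 ≤ m → r m ≤ R := by
      intro m hm
      have hx : (T:ℝ) + 1 ≤ (m:ℝ) := by exact_mod_cast hm
      rw [hrdef, hRdef]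
      have hd1 : (0:ℝ) < ((m:ℝ) + 1)^2 := by positivity
      have hd2 : (0:ℝ) < ((T:ℝ) + 2)^2 := by positivity
      rw [div_le_div_iff₀ hd1 hd2]
      have := keyIneq hA hδ hT0 hx
      nlinarith [this]
    apply Summable.tsum_lt_tsum_of_nonneg (i := T + 2)
    · intro m
      have hr0 : 0 ≤ r m := by
        rw [hrdef]; positivity
      exact mul_nonneg (mul_nonneg hlam.le hr0) (blockTerm_nonneg hμ hK T m)
    · intro m
      by_cases h : T + 1 ≤ m
      · have hbt := blockTerm_nonneg hμ hK T m
        calc lam * r m * blockTerm μ K T m = r m * (lam * blockTerm μ K T m) := by ring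
          _ ≤ R * (lam * blockTerm μ K T m) :=
              mul_le_mul_of_nonneg_right (hrle m h) (mul_nonneg hlam.le hbt)
          _ = R * lam * blockTerm μ K T m := by ring
      · have h0 : blockTerm μ K T m = 0 := by
          unfold blockTerm; rw [if_neg h]
        rw [h0, mul_zero, mul_zero]
    · -- strict at T+2
      have hrlt : r (T + 2) < R := by
        have hx : (T:ℝ) + 1 < ((T+2:ℕ):ℝ) := by push_cast; linarith
        rw [hrdef, hRdef]
        have hd1 : (0:ℝ) < (((T+2:ℕ):ℝ) + 1)^2 := by positivity
        have hd2 : (0:ℝ) < ((T:ℝ) + 2)^2 := by positivity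
        rw [div_lt_div_iff₀ hd1 hd2]
        have := keyIneqStrict hA hδ hT0 hx
        push_cast at this ⊢
        nlinarith [this]
      calc lam * r (T+2) * blockTerm μ K T (T + 2)
            = r (T+2) * (lam * blockTerm μ K T (T + 2)) := by ring
        _ < R * (lam * blockTerm μ K T (T + 2)) :=
            mul_lt_mul_of_pos_right hrlt (mul_pos hlam hBT2)
        _ = R * lam * blockTerm μ K T (T + 2) := by ring
    · exact hsum.mul_left (R * lam)
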